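/- Let I, J, K be disjoint index sets and C = (C_{k,l})_{k,l ∈ I⊔J⊔K} a matrix of complex numbers. Then there is exactly one free-free-Boolean central limit distribution Γ_C : ℂ⟨Z_k : k ∈ I⊔J⊔K⟩ → ℂ with Γ_C(Z_k Z_l) = C_{k,l} for all k, l ∈ I⊔J⊔K. -/

import Mathlib

namespace FFB

/-- The three letters ℓ, c, r labelling the faces. -/
inductive Letter : Type where
  | l | c | r
deriving DecidableEq

/-- `x` is one of the letters `ℓ`, `c`. -/
def isLC (x : Letter) : Prop := x = Letter.l ∨ x = Letter.c

variable {α : Type*}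

/-- The total order `≺_χ` on the index set determined by `χ`:
the elements of `χ⁻¹{ℓ,c}` in increasing order followed by the elements of
`χ⁻¹{r}` in decreasing order. -/
def chiLT [LT α] (χ : α → Letter) (i j : α) : Prop :=
  (isLC (χ i) ∧ isLC (χ j) ∧ i < j)
  ∨ (isLC (χ i) ∧ χ j = Letter.r)
  ∨ (χ i = Letter.r ∧ χ j = Letter.r ∧ j < i)

/-- A partition (equivalence relation) `π` is `χ`-noncrossing if there is no quadruple
`s₁ ≺_χ r₁ ≺_χ s₂ ≺_χ r₂` with `s₁ ∼ s₂`, `r₁ ∼ r₂` lying in different blocks. -/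
def ChiNoncrossing [LT α] (χ : α → Letter) (π : Setoid α) : Prop :=
  ∀ s₁ r₁ s₂ r₂ : α, chiLT χ s₁ r₁ → chiLT χ r₁ s₂ → chiLT χ s₂ r₂ →
    π s₁ s₂ → π r₁ r₂ → π s₁ r₁

/-- A partition `π` is `χ`-interval if whenever `i < j < k`, `i ∼ k` and `χ j = c`,
then `i, j, k` all lie in the same block. -/
def ChiInterval [LT α] (χ : α → Letter) (π : Setoid α) : Prop :=
  ∀ i j k : α, i < j → j < k → χ j = Letter.c → π i k → π i j

/-- The set of interval-bi-noncrossing partitions with respect to `χ`. -/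
def IBNC [LT α] (χ : α → Letter) : Set (Setoid α) :=
  {π | ChiNoncrossing χ π ∧ ChiInterval χ π}

/-- The set of `χ`-noncrossing partitions. -/
def NC [LT α] (χ : α → Letter) : Set (Setoid α) :=
  {π | ChiNoncrossing χ π}

/-- Restriction of a partition of `α` to a subset `V ⊆ α`. -/
def restrict (V : Set α) (σ : Setoid α) : Setoid V := Setoid.comap Subtype.val σ

/-- Restriction of `χ` to a subset `V ⊆ α`. -/
def restChi (V : Set α) (χ : α → Letter) : V → Letter := fun x => χ x.1

/- `mu` is the Möbius function of the finite poset `P` (with the induced order):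
it is the (two-sided) convolution inverse of the zeta function. -/
open Classical in
def IsMobius {β : Type*} [PartialOrder β] (P : Set β) (mu : β → β → ℂ) : Prop :=
  ∀ a ∈ P, ∀ b ∈ P, a ≤ b →
    ((∑ᶠ c ∈ {c | c ∈ P ∧ a ≤ c ∧ c ≤ b}, mu a c) = if a = b then 1 else 0) ∧
    ((∑ᶠ c ∈ {c | c ∈ P ∧ a ≤ c ∧ c ≤ b}, mu c b) = if a = b then 1 else 0)

section Moments

variable {A : Type*} [Ring A] [LinearOrder α] [Finite α]

/-- `φ_V(z₁,…,zₙ) = φ(z_{l₁} ⋯ z_{l_k})` where `V = {l₁ < ⋯ < l_k}`. -/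
noncomputable def phiV (φ : A → ℂ) (z : α → A) (V : Set α) : ℂ :=
  φ (((Set.toFinite V).toFinset.sort (· ≤ ·)).map z).prod

/-- `φ_σ(z₁,…,zₙ) = ∏_{V ∈ σ} φ_V(z₁,…,zₙ)`. -/
noncomputable def phiPart (φ : A → ℂ) (z : α → A) (σ : Setoid α) : ℂ :=
  ∏ᶠ q : Quotient σ, phiV φ z {y | Quotient.mk σ y = q}

/-- The free-free-Boolean cumulant
`κ_{χ,π}(z₁,…,zₙ) = Σ_{σ ∈ IBNC(χ), σ ≤ π} μ_{IBNC(χ)}(σ,π) φ_σ(z₁,…,zₙ)`,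
where `mu` is (a function which is) the Möbius function of `IBNC(χ)`. -/
noncomputable def cum (φ : A → ℂ) (χ : α → Letter)
    (mu : Setoid α → Setoid α → ℂ) (z : α → A) (π : Setoid α) : ℂ :=
  ∑ᶠ σ ∈ {σ | σ ∈ IBNC χ ∧ σ ≤ π}, mu σ π * phiPart φ z σ

end Moments

/-- Combinatorial free-free-Boolean independence: mixed cumulants vanish.
`F i x` is the face of the `i`-th triple labelled by the letter `x`. -/
def CombFFB {A : Type*} [Ring A] [Algebra ℂ A] (φ : A →ₗ[ℂ] ℂ) {I : Type*}
    (F : I → Letter → NonUnitalSubalgebra ℂ A) : Prop :=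
  ∀ (n : ℕ) (χ : Fin n → Letter) (ω : Fin n → I) (z : Fin n → A),
    (∀ k, z k ∈ F (ω k) (χ k)) → (¬ ∃ i, ∀ k, ω k = i) →
    ∀ mu : Setoid (Fin n) → Setoid (Fin n) → ℂ, IsMobius (IBNC χ) mu →
      cum (⇑φ) χ mu z ⊤ = 0

end FFB

namespace FFB

/-- The map `χ_ω` determined by a word `ω` in the disjoint union `I ⊔ J ⊔ K`; the disjoint
union of the three index sets is encoded as a type `S` together with a labelling
`lab : S → Letter` (`lab⁻¹(ℓ) = I`, `lab⁻¹(r) = J`, `lab⁻¹(c) = K`). -/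
def chiOf {S : Type*} (lab : S → Letter) {n : ℕ} (ω : Fin n → S) : Fin n → Letter :=
  fun k => lab (ω k)

/-- `Γ` is a free-free-Boolean central limit distribution on `ℂ⟨Z_k : k ∈ I ⊔ J ⊔ K⟩`:
it is a unital linear functional all of whose free-free-Boolean cumulants of order `n ≠ 2`
vanish. -/
def IsCLTDistribution {S : Type*} (lab : S → Letter)
    (Γ : FreeAlgebra ℂ S →ₗ[ℂ] ℂ) : Prop :=
  Γ 1 = 1 ∧
  ∀ (n : ℕ), 0 < n → n ≠ 2 → ∀ (ω : Fin n → S)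
    (mu : Setoid (Fin n) → Setoid (Fin n) → ℂ),
    IsMobius (IBNC (chiOf lab ω)) mu →
    cum (⇑Γ) (chiOf lab ω) mu (fun k => FreeAlgebra.ι ℂ (ω k)) ⊤ = 0

section Mobius

variable {β : Type*} [PartialOrder β] [Finite β]

open Classical Finset

theorem exists_isMobius (P : Set β) : ∃ mu, IsMobius P mu := by
  letI : Fintype β := Fintype.ofFinite β
  set ν : Matrix P P ℂ := fun a b => if (a : β) < (b : β) then 1 else 0 with hν
  have hνe : ∀ a b : P, ν a b ≠ 0 → (a : β) < (b : β) := by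
    intro a b h
    by_contra hc
    simp only [hν, if_neg hc] at h
    exact h rfl
  set h : P → ℕ := fun a => (univ.filter (fun c : P => (c : β) ≤ (a : β))).card with hh
  have hmono : ∀ a b : P, (a : β) < (b : β) → h a < h b := by
    intro a b hab
    apply Finset.card_lt_card
    constructor
    · intro c hc
      simp only [mem_filter, mem_univ, true_and] at hc ⊢
      exact hc.trans hab.le
    · intro hsub
      have : b ∈ univ.filter (fun c : P => (c : β) ≤ (a : β)) := by
        apply hsub; simp
      simp only [mem_filter, mem_univ, true_and] at this
      exact absurd (lt_of_le_of_lt this hab) (lt_irrefl _)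
  have hpow : ∀ (m : ℕ) (a b : P), (ν ^ m) a b ≠ 0 → h a + m ≤ h b := by
    intro m
    induction m with
    | zero =>
      intro a b hab
      have : a = b := by
        by_contra hc
        simp [Matrix.one_apply, hc] at hab
      simp [this]
    | succ m ih =>
      intro a b hab
      rw [pow_succ, Matrix.mul_apply] at hab
      obtain ⟨c, -, hc⟩ := Finset.exists_ne_zero_of_sum_ne_zero hab
      have h1 : (ν ^ m) a c ≠ 0 := fun h0 => hc (by rw [h0, zero_mul])
      have h2 : ν c b ≠ 0 := fun h0 => hc (by rw [h0, mul_zero])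
      have ha := ih a c h1
      have hb := hmono c b (hνe c b h2)
      omega
  set N : ℕ := Fintype.card P with hN
  have hνN : ν ^ N = 0 := by
    ext a b
    simp only [Matrix.zero_apply]
    by_contra hab
    have h1 := hpow N a b hab
    have h2 : h b ≤ N := by
      rw [hh, hN]
      exact (Finset.card_filter_le _ _).trans (by simp)
    have h3 : 1 ≤ h a := by
      rw [hh]
      exact Finset.card_pos.2 ⟨a, by simp⟩
    omega
  set μM : Matrix P P ℂ := ∑ k ∈ Finset.range N, (-ν) ^ k with hμ
  have hnegN : (-ν) ^ N = 0 := by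
    rw [neg_pow, hνN, mul_zero]
  have hμζ : μM * (1 + ν) = 1 := by
    have := geom_sum_mul (-ν) N
    rw [hnegN, ← hμ] at this
    have h2 : -ν - 1 = -(1 + ν) := by abel
    rw [h2, zero_sub, mul_neg] at this
    exact neg_injective this
  have hζμ : (1 + ν) * μM = 1 := by
    have := mul_geom_sum (-ν) N
    rw [hnegN, ← hμ] at this
    have h2 : -ν - 1 = -(1 + ν) := by abel
    rw [h2, zero_sub, neg_mul] at this
    exact neg_injective this
  have hμsupp : ∀ a b : P, μM a b ≠ 0 → (a : β) ≤ (b : β) := by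
    have hk : ∀ (k : ℕ) (a b : P), ((-ν) ^ k) a b ≠ 0 → (a : β) ≤ (b : β) := by
      intro k
      induction k with
      | zero =>
        intro a b hab
        have : a = b := by
          by_contra hc
          simp [Matrix.one_apply, hc] at hab
        simp [this]
      | succ k ih =>
        intro a b hab
        rw [pow_succ, Matrix.mul_apply] at hab
        obtain ⟨c, -, hc⟩ := Finset.exists_ne_zero_of_sum_ne_zero hab
        have h1 : ((-ν) ^ k) a c ≠ 0 := fun h0 => hc (by rw [h0, zero_mul])
        have h3 : ν c b ≠ 0 := by
          intro h0
          apply hc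
          rw [show (-ν) c b = -(ν c b) from rfl, h0, neg_zero, mul_zero]
        exact (ih a c h1).trans (hνe c b h3).le
    intro a b hab
    rw [hμ, Matrix.sum_apply] at hab
    obtain ⟨k, -, hk'⟩ := Finset.exists_ne_zero_of_sum_ne_zero hab
    exact hk k a b hk'
  refine ⟨fun a b => if hab : a ∈ P ∧ b ∈ P then μM ⟨a, hab.1⟩ ⟨b, hab.2⟩ else 0, ?_⟩
  intro a ha b hb hab
  set A : P := ⟨a, ha⟩
  set B : P := ⟨b, hb⟩
  have hset : {c | c ∈ P ∧ a ≤ c ∧ c ≤ b}.Finite := Set.toFinite _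
  have hζe : ∀ c d : P, (1 + ν) c d = if (c : β) ≤ (d : β) then 1 else 0 := by
    intro c d
    by_cases hcd : (c : β) = (d : β)
    · have : c = d := Subtype.ext hcd
      subst this
      rw [Matrix.add_apply]
      simp [hν, Matrix.one_apply]
    by_cases hlt : (c : β) < (d : β)
    · have hne : c ≠ d := fun h => hcd (congrArg _ h)
      have hlt2 : c < d := Subtype.coe_lt_coe.mp hlt
      rw [Matrix.add_apply]
      simp [hν, Matrix.one_apply, hne, hlt2, hlt.le]
    · have hle : ¬ (c : β) ≤ (d : β) := fun h => hlt (lt_of_le_of_ne h hcd)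
      have hne : c ≠ d := fun h => hcd (congrArg _ h)
      have hlt2 : ¬ c < d := fun h => hlt (Subtype.coe_lt_coe.mpr h)
      rw [Matrix.add_apply]
      simp [hν, Matrix.one_apply, hne, hlt2, hle]
  have hAB : (A = B) = (a = b) := by
    simp [A, B, Subtype.ext_iff]
  constructor
  · -- first equation: sum of mu a c over interval
    have key := congrFun (congrFun hμζ A) B
    rw [Matrix.mul_apply] at key
    have key2 : ∑ c : P, μM A c * (1 + ν) c B = ∑ c ∈ univ.filter (fun c : P => a ≤ (c : β) ∧ (c : β) ≤ b), μM A c := by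
      rw [Finset.sum_filter]
      apply Finset.sum_congr rfl
      intro c _
      by_cases h1 : a ≤ (c : β) <;> by_cases h2 : (c : β) ≤ b
      · simp [hζe, h1, h2, show c ≤ B from h2]
      · simp [hζe, h1, h2, show ¬ c ≤ B from h2]
      · have : μM A c = 0 := by
          by_contra hc
          exact h1 (hμsupp A c hc)
        simp [this]
      · have : μM A c = 0 := by
          by_contra hc
          exact h1 (hμsupp A c hc)
        simp [this]
    have hbij : ∑ c ∈ hset.toFinset, (if hc : a ∈ P ∧ c ∈ P then μM ⟨a, hc.1⟩ ⟨c, hc.2⟩ else 0) = ∑ c ∈ univ.filter (fun c : P => a ≤ (c : β) ∧ (c : β) ≤ b), μM A c := by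
      apply Finset.sum_nbij' (fun c => if hc : c ∈ P then (⟨c, hc⟩ : P) else B) (fun c => (c : β))
      · intro c hc
        simp only [Set.Finite.mem_toFinset, Set.mem_setOf_eq] at hc
        simp [hc.1, hc.2.1, hc.2.2]
      · intro c hc
        simp only [mem_filter, mem_univ, true_and] at hc
        simp only [Set.Finite.mem_toFinset, Set.mem_setOf_eq]
        exact ⟨c.2, hc.1, hc.2⟩
      · intro c hc
        simp only [Set.Finite.mem_toFinset, Set.mem_setOf_eq] at hc
        simp [hc.1]
      · intro c hc
        simp [c.2]
      · intro c hc
        simp only [Set.Finite.mem_toFinset, Set.mem_setOf_eq] at hc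
        simp [ha, hc.1]
        rfl
    have goal : ∑ᶠ c ∈ {c | c ∈ P ∧ a ≤ c ∧ c ≤ b}, (if hc : a ∈ P ∧ c ∈ P then μM ⟨a, hc.1⟩ ⟨c, hc.2⟩ else 0) = if a = b then 1 else 0 := by
      rw [finsum_mem_eq_finite_toFinset_sum _ hset, hbij, ← key2, key, Matrix.one_apply]
      simp [A, B, Subtype.ext_iff]
    exact goal
  · -- second equation: sum of mu c b over interval
    have key := congrFun (congrFun hζμ A) B
    rw [Matrix.mul_apply] at key
    have key2 : ∑ c : P, (1 + ν) A c * μM c B = ∑ c ∈ univ.filter (fun c : P => a ≤ (c : β) ∧ (c : β) ≤ b), μM c B := by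
      rw [Finset.sum_filter]
      apply Finset.sum_congr rfl
      intro c _
      by_cases h1 : a ≤ (c : β) <;> by_cases h2 : (c : β) ≤ b
      · simp [hζe, h1, h2, show A ≤ c from h1]
      · have : μM c B = 0 := by
          by_contra hc
          exact h2 (hμsupp c B hc)
        simp [this]
      · simp [hζe, h1, h2, show ¬ A ≤ c from h1]
      · have : μM c B = 0 := by
          by_contra hc
          exact h2 (hμsupp c B hc)
        simp [this]
    have hbij : ∑ c ∈ hset.toFinset, (if hc : c ∈ P ∧ b ∈ P then μM ⟨c, hc.1⟩ ⟨b, hc.2⟩ else 0) = ∑ c ∈ univ.filter (fun c : P => a ≤ (c : β) ∧ (c : β) ≤ b), μM c B := by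
      apply Finset.sum_nbij' (fun c => if hc : c ∈ P then (⟨c, hc⟩ : P) else B) (fun c => (c : β))
      · intro c hc
        simp only [Set.Finite.mem_toFinset, Set.mem_setOf_eq] at hc
        simp [hc.1, hc.2.1, hc.2.2]
      · intro c hc
        simp only [mem_filter, mem_univ, true_and] at hc
        simp only [Set.Finite.mem_toFinset, Set.mem_setOf_eq]
        exact ⟨c.2, hc.1, hc.2⟩
      · intro c hc
        simp only [Set.Finite.mem_toFinset, Set.mem_setOf_eq] at hc
        simp [hc.1]
      · intro c hc
        simp [c.2]
      · intro c hc
        simp only [Set.Finite.mem_toFinset, Set.mem_setOf_eq] at hc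
        simp [hb, hc.1]
        rfl
    have goal : ∑ᶠ c ∈ {c | c ∈ P ∧ a ≤ c ∧ c ≤ b}, (if hc : c ∈ P ∧ b ∈ P then μM ⟨c, hc.1⟩ ⟨b, hc.2⟩ else 0) = if a = b then 1 else 0 := by
      rw [finsum_mem_eq_finite_toFinset_sum _ hset, hbij, ← key2, key, Matrix.one_apply]
      simp [A, B, Subtype.ext_iff]
    exact goal

theorem isMobius_apply_self {P : Set β} {mu : β → β → ℂ}
    (h : IsMobius P mu) {a : β} (ha : a ∈ P) : mu a a = 1 := by
  have e1 := (h a ha a ha le_rfl).1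
  have hs : {c | c ∈ P ∧ a ≤ c ∧ c ≤ a} = {a} := by
    ext c
    simp only [Set.mem_setOf_eq, Set.mem_singleton_iff]
    constructor
    · rintro ⟨-, h1, h2⟩
      exact le_antisymm h2 h1
    · rintro rfl
      exact ⟨ha, le_rfl, le_rfl⟩
  rw [hs, finsum_mem_singleton, if_pos rfl] at e1
  exact e1

theorem isMobius_unique {P : Set β} {mu mu' : β → β → ℂ}
    (h : IsMobius P mu) (h' : IsMobius P mu') {a : β} (ha : a ∈ P) :
    ∀ b, b ∈ P → a ≤ b → mu a b = mu' a b := by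
  intro b
  induction b using WellFoundedLT.induction with
  | _ b ih =>
    intro hb hab
    have e1 := (h a ha b hb hab).1
    have e1' := (h' a ha b hb hab).1
    have hs : {c | c ∈ P ∧ a ≤ c ∧ c ≤ b}.Finite := Set.toFinite _
    rw [finsum_mem_eq_finite_toFinset_sum _ hs] at e1 e1'
    have hbmem : b ∈ hs.toFinset := by
      simp only [Set.Finite.mem_toFinset, Set.mem_setOf_eq]
      exact ⟨hb, hab, le_rfl⟩
    rw [← Finset.add_sum_erase _ _ hbmem] at e1 e1'
    have hrest : ∑ c ∈ hs.toFinset.erase b, mu a c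
        = ∑ c ∈ hs.toFinset.erase b, mu' a c := by
      apply Finset.sum_congr rfl
      intro c hc
      rw [Finset.mem_erase, Set.Finite.mem_toFinset] at hc
      exact ih c (lt_of_le_of_ne hc.2.2.2 hc.1) hc.2.1 hc.2.2.1
    have := e1.trans e1'.symm
    rw [hrest] at this
    exact add_right_cancel this

end Mobius

/-! ### Auxiliary constructions -/

instance {γ : Type*} [Finite γ] : Finite (Setoid γ) :=
  Finite.of_injective (fun s : Setoid γ => s.r)
    (fun s t h => by cases s; cases t; congr)


section Construction

open Classical

variable {S : Type*}

/-- The block of `q` as a finset. -/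
noncomputable def blockFinset {n : ℕ} (σ : Setoid (Fin n)) (q : Quotient σ) : Finset (Fin n) :=
  (Set.toFinite {y | Quotient.mk σ y = q}).toFinset

/-- The block of `q` as a sorted list. -/
noncomputable def blockList {n : ℕ} (σ : Setoid (Fin n)) (q : Quotient σ) : List (Fin n) :=
  (blockFinset σ q).sort (· ≤ ·)

/-- The size of the block of `q`. -/
noncomputable def blockCard {n : ℕ} (σ : Setoid (Fin n)) (q : Quotient σ) : ℕ :=
  (blockFinset σ q).card

lemma length_blockList {n : ℕ} (σ : Setoid (Fin n)) (q : Quotient σ) :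
    (blockList σ q).length = blockCard σ q := Finset.length_sort _

/-- The subword of `ω` along the block of `q`. -/
noncomputable def subword {n : ℕ} (σ : Setoid (Fin n)) (q : Quotient σ)
    (ω : Fin n → S) : Fin (blockCard σ q) → S :=
  fun i => ω ((blockList σ q).get (Fin.cast (length_blockList σ q).symm i))

/-- Combine a moment function multiplicatively over the blocks of `σ`. -/
noncomputable def blockProd (f : ∀ m : ℕ, (Fin m → S) → ℂ) {n : ℕ}
    (ω : Fin n → S) (σ : Setoid (Fin n)) : ℂ :=
  ∏ᶠ q : Quotient σ, f (blockCard σ q) (subword σ q ω)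

lemma mcongr (f : ∀ m : ℕ, (Fin m → S) → ℂ) {m m' : ℕ} (h : m = m')
    {ω : Fin m → S} {ω' : Fin m' → S} (hw : ∀ i : Fin m, ω i = ω' (Fin.cast h i)) :
    f m ω = f m' ω' := by
  subst h
  congr 1
  funext i
  exact hw i

/-- `IBNC` as a finset. -/
noncomputable def IBNCfin {n : ℕ} (χ : Fin n → Letter) : Finset (Setoid (Fin n)) :=
  (Set.toFinite (IBNC χ)).toFinset

lemma top_mem_IBNC {n : ℕ} (χ : Fin n → Letter) : (⊤ : Setoid (Fin n)) ∈ IBNC χ := by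
  constructor
  · intro s₁ r₁ s₂ r₂ _ _ _ _ _
    trivial
  · intro i j k _ _ _ _
    trivial

lemma top_mem_IBNCfin {n : ℕ} (χ : Fin n → Letter) : (⊤ : Setoid (Fin n)) ∈ IBNCfin χ := by
  rw [IBNCfin, Set.Finite.mem_toFinset]
  exact top_mem_IBNC χ

/-- A choice of Möbius function for `IBNC χ`. -/
noncomputable def muN {n : ℕ} (χ : Fin n → Letter) :
    Setoid (Fin n) → Setoid (Fin n) → ℂ :=
  Classical.choose (exists_isMobius (IBNC χ))

lemma muN_isMobius {n : ℕ} (χ : Fin n → Letter) : IsMobius (IBNC χ) (muN χ) :=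
  Classical.choose_spec (exists_isMobius (IBNC χ))

lemma blockCard_lt {n : ℕ} {σ : Setoid (Fin n)} (hσ : σ ≠ ⊤) (q : Quotient σ) :
    blockCard σ q < n := by
  have hne : blockFinset σ q ≠ Finset.univ := by
    intro he
    apply hσ
    have hall : ∀ i j : Fin n, σ i j := by
      intro i j
      have hi : i ∈ blockFinset σ q := he ▸ Finset.mem_univ i
      have hj : j ∈ blockFinset σ q := he ▸ Finset.mem_univ j
      rw [blockFinset, Set.Finite.mem_toFinset, Set.mem_setOf_eq] at hi hj
      exact Quotient.exact (hi.trans hj.symm)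
    ext i j
    simp only [Setoid.top_def]
    exact iff_of_true (hall i j) trivial
  calc (blockFinset σ q).card < Finset.univ.card :=
        Finset.card_lt_card (Finset.ssubset_univ_iff.mpr hne)
    _ = n := by simp

lemma blockProd_top {n : ℕ} (hn : 0 < n) (f : ∀ m : ℕ, (Fin m → S) → ℂ)
    (ω : Fin n → S) : blockProd f ω (⊤ : Setoid (Fin n)) = f n ω := by
  have hsub : Subsingleton (Quotient (⊤ : Setoid (Fin n))) := by
    constructor
    intro a b
    induction a using Quotient.ind
    induction b using Quotient.ind
    exact Quotient.sound trivial
  set q₀ : Quotient (⊤ : Setoid (Fin n)) := Quotient.mk ⊤ ⟨0, hn⟩ with hq₀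
  letI : Unique (Quotient (⊤ : Setoid (Fin n))) := uniqueOfSubsingleton q₀
  rw [blockProd, finprod_unique]
  have hBF : blockFinset (⊤ : Setoid (Fin n)) (default) = Finset.univ := by
    ext y
    rw [blockFinset, Set.Finite.mem_toFinset, Set.mem_setOf_eq]
    simp only [Finset.mem_univ, iff_true]
    exact hsub.elim _ _
  have hcard : blockCard (⊤ : Setoid (Fin n)) (default) = n := by
    rw [blockCard, hBF]
    simp
  apply mcongr f hcard
  intro i
  rw [subword]
  congr 1
  apply Fin.ext
  have hbl : blockList (⊤ : Setoid (Fin n)) (default) = List.finRange n := by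
    rw [blockList, hBF, Fin.sort_univ]
  have : ∀ (l : List (Fin n)) (hl : l = List.finRange n) (j : Fin l.length),
      (l.get j).val = j.val := by
    rintro l rfl j
    simp [List.get_finRange]
  rw [this _ hbl]
  simp

/-- The product of the generators along a word. -/
noncomputable def wp {m : ℕ} (ω : Fin m → S) : FreeAlgebra ℂ S :=
  (List.ofFn fun i => FreeAlgebra.ι ℂ (ω i)).prod

lemma ofFn_get_cast {γ δ : Type*} (l : List γ) {m : ℕ} (h : m = l.length) (f : γ → δ) :
    List.ofFn (fun i : Fin m => f (l.get (Fin.cast h i))) = l.map f := by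
  subst h
  simpa using List.ofFn_getElem_eq_map l f

lemma phiV_block (φ : FreeAlgebra ℂ S → ℂ) {n : ℕ} (ω : Fin n → S)
    (σ : Setoid (Fin n)) (q : Quotient σ) :
    phiV φ (fun k => FreeAlgebra.ι ℂ (ω k)) {y | Quotient.mk σ y = q}
      = φ (wp (subword σ q ω)) := by
  rw [phiV, wp]
  congr 1
  rw [show (List.ofFn fun i => FreeAlgebra.ι ℂ (subword σ q ω i))
      = (blockList σ q).map (fun k => FreeAlgebra.ι ℂ (ω k)) from
    ofFn_get_cast (blockList σ q) (length_blockList σ q).symm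
      (fun k => FreeAlgebra.ι ℂ (ω k))]
  rfl

lemma phiPart_eq (φ : FreeAlgebra ℂ S → ℂ) {n : ℕ} (ω : Fin n → S)
    (σ : Setoid (Fin n)) :
    phiPart φ (fun k => FreeAlgebra.ι ℂ (ω k)) σ
      = blockProd (fun _ ω' => φ (wp ω')) ω σ := by
  rw [phiPart, blockProd]
  exact finprod_congr fun q => phiV_block φ ω σ q

lemma cum_eq (lab : S → Letter) (φ : FreeAlgebra ℂ S → ℂ) {n : ℕ} (ω : Fin n → S)
    (mu : Setoid (Fin n) → Setoid (Fin n) → ℂ) :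
    cum φ (chiOf lab ω) mu (fun k => FreeAlgebra.ι ℂ (ω k)) ⊤
      = ∑ σ ∈ IBNCfin (chiOf lab ω),
          mu σ ⊤ * blockProd (fun _ ω' => φ (wp ω')) ω σ := by
  rw [cum]
  have hS : {σ : Setoid (Fin n) | σ ∈ IBNC (chiOf lab ω) ∧ σ ≤ ⊤}.Finite :=
    Set.toFinite _
  rw [finsum_mem_eq_finite_toFinset_sum _ hS]
  have hfs : hS.toFinset = IBNCfin (chiOf lab ω) := by
    ext σ
    rw [Set.Finite.mem_toFinset, IBNCfin, Set.Finite.mem_toFinset]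
    simp [le_top]
  rw [hfs]
  exact Finset.sum_congr rfl fun σ _ => by rw [phiPart_eq]

lemma cum_split (lab : S → Letter) (φ : FreeAlgebra ℂ S → ℂ) {n : ℕ} (hn : 0 < n)
    (ω : Fin n → S) (mu : Setoid (Fin n) → Setoid (Fin n) → ℂ)
    (hmu : IsMobius (IBNC (chiOf lab ω)) mu) :
    cum φ (chiOf lab ω) mu (fun k => FreeAlgebra.ι ℂ (ω k)) ⊤
      = φ (wp ω) + ∑ σ ∈ (IBNCfin (chiOf lab ω)).erase ⊤,
          muN (chiOf lab ω) σ ⊤ * blockProd (fun _ ω' => φ (wp ω')) ω σ := by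
  rw [cum_eq, ← Finset.add_sum_erase _ _ (top_mem_IBNCfin (chiOf lab ω))]
  congr 1
  · rw [isMobius_apply_self hmu (top_mem_IBNC _), one_mul, blockProd_top hn]
  · apply Finset.sum_congr rfl
    intro σ hσ
    rw [Finset.mem_erase, IBNCfin, Set.Finite.mem_toFinset] at hσ
    rw [isMobius_unique hmu (muN_isMobius (chiOf lab ω)) hσ.2 ⊤ (top_mem_IBNC _) le_top]

end Construction


section MomentFunction

open Classical

variable {S : Type*}

/-- One step of the recursive definition of the moments. -/
noncomputable def mStep (lab : S → Letter) (C : S → S → ℂ) (n : ℕ)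
    (rec : ∀ m : ℕ, m < n → (Fin m → S) → ℂ) (ω : Fin n → S) : ℂ :=
  if n = 0 then 1
  else if h2 : n = 2 then C (ω (Fin.cast h2.symm 0)) (ω (Fin.cast h2.symm 1))
  else - ∑ σ ∈ (IBNCfin (chiOf lab ω)).erase ⊤,
      muN (chiOf lab ω) σ ⊤ *
        blockProd (fun m => if h : m < n then rec m h else fun _ => 0) ω σ

/-- The moments of the free-free-Boolean central limit distribution. -/
noncomputable def mFun (lab : S → Letter) (C : S → S → ℂ) : ∀ n : ℕ, (Fin n → S) → ℂ :=
  WellFounded.fix (Nat.lt_wfRel.wf) (mStep lab C)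

lemma mFun_eq (lab : S → Letter) (C : S → S → ℂ) (n : ℕ) :
    mFun lab C n = mStep lab C n (fun m _ => mFun lab C m) :=
  WellFounded.fix_eq _ _ n

lemma mFun_zero (lab : S → Letter) (C : S → S → ℂ) (ω : Fin 0 → S) :
    mFun lab C 0 ω = 1 := by
  rw [mFun_eq]
  rfl

lemma mFun_two (lab : S → Letter) (C : S → S → ℂ) (ω : Fin 2 → S) :
    mFun lab C 2 ω = C (ω 0) (ω 1) := by
  rw [mFun_eq]
  rfl

lemma mFun_rec (lab : S → Letter) (C : S → S → ℂ) {n : ℕ} (h0 : n ≠ 0) (h2 : n ≠ 2)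
    (ω : Fin n → S) :
    mFun lab C n ω = - ∑ σ ∈ (IBNCfin (chiOf lab ω)).erase ⊤,
      muN (chiOf lab ω) σ ⊤ * blockProd (mFun lab C) ω σ := by
  rw [mFun_eq, mStep, if_neg h0, dif_neg h2]
  congr 1
  apply Finset.sum_congr rfl
  intro σ hσ
  rw [Finset.mem_erase] at hσ
  congr 1
  rw [blockProd, blockProd]
  apply finprod_congr
  intro q
  rw [dif_pos (blockCard_lt hσ.1 q)]

end MomentFunction


section Gamma

open Classical

variable {S : Type*}

lemma equiv_iota (x : S) :
    FreeAlgebra.equivMonoidAlgebraFreeMonoid (FreeAlgebra.ι ℂ x)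
      = MonoidAlgebra.single (FreeMonoid.of x) (1 : ℂ) := by
  rw [FreeAlgebra.equivMonoidAlgebraFreeMonoid]
  show (FreeAlgebra.lift ℂ fun x => (MonoidAlgebra.of ℂ (FreeMonoid S)) (FreeMonoid.of x))
      (FreeAlgebra.ι ℂ x) = _
  rw [FreeAlgebra.lift_ι_apply]
  rfl

lemma equiv_listProd (l : List S) :
    FreeAlgebra.equivMonoidAlgebraFreeMonoid ((l.map (FreeAlgebra.ι ℂ)).prod)
      = MonoidAlgebra.single (FreeMonoid.ofList l) (1 : ℂ) := by
  induction l with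
  | nil =>
    simp only [List.map_nil, List.prod_nil, map_one]
    rfl
  | cons a l ih =>
    rw [List.map_cons, List.prod_cons, map_mul, ih, equiv_iota,
      MonoidAlgebra.single_mul_single, one_mul]
    rfl

/-- The CLT distribution with covariance `C`. -/
noncomputable def gammaFun (lab : S → Letter) (C : S → S → ℂ) :
    FreeAlgebra ℂ S →ₗ[ℂ] ℂ :=
  (Finsupp.linearCombination ℂ
      (fun w : FreeMonoid S => mFun lab C w.toList.length (fun i => w.toList.get i))).comp
    ((MonoidAlgebra.coeffLinearEquiv ℂ).toLinearMap.comp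
    (FreeAlgebra.equivMonoidAlgebraFreeMonoid (R := ℂ) (X := S)).toLinearMap)

lemma gamma_single (lab : S → Letter) (C : S → S → ℂ) (w : FreeMonoid S) (c : ℂ) :
    Finsupp.linearCombination ℂ
      (fun w : FreeMonoid S => mFun lab C w.toList.length (fun i => w.toList.get i))
      (MonoidAlgebra.single w c).coeff
      = c * mFun lab C w.toList.length (fun i => w.toList.get i) := by
  rw [show (MonoidAlgebra.single w c : MonoidAlgebra ℂ (FreeMonoid S)).coeff
    = Finsupp.single w c from rfl, Finsupp.linearCombination_single]
  simp

lemma gamma_wp (lab : S → Letter) (C : S → S → ℂ) {n : ℕ} (ω : Fin n → S) :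
    gammaFun lab C (wp ω) = mFun lab C n ω := by
  have happ : ∀ x : FreeAlgebra ℂ S, gammaFun lab C x
      = Finsupp.linearCombination ℂ
          (fun w : FreeMonoid S => mFun lab C w.toList.length (fun i => w.toList.get i))
          (FreeAlgebra.equivMonoidAlgebraFreeMonoid x).coeff := fun x => rfl
  rw [happ, wp, show (List.ofFn fun i => FreeAlgebra.ι ℂ (ω i))
      = (List.ofFn ω).map (FreeAlgebra.ι ℂ) from (List.map_ofFn (f := ω) (g := FreeAlgebra.ι ℂ)).symm]
  rw [equiv_listProd, gamma_single, one_mul]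
  apply mcongr (mFun lab C) (by simp)
  intro i
  simp only [FreeMonoid.toList_ofList, List.get_ofFn]
  exact List.getElem_ofFn ..

lemma wp_nil (ω : Fin 0 → S) : wp ω = 1 := by
  rw [wp]
  simp

lemma wp_pair (k l : S) :
    wp (fun i : Fin 2 => if i = 0 then k else l)
      = FreeAlgebra.ι ℂ k * FreeAlgebra.ι ℂ l := by
  rw [wp]
  simp [List.ofFn_succ]

lemma wp_list (l : List S) :
    (l.map (FreeAlgebra.ι ℂ)).prod = wp (fun i : Fin l.length => l.get i) := by
  rw [wp, ← ofFn_get_cast l rfl (FreeAlgebra.ι ℂ)]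
  rfl

/-- Uniqueness of the moments. -/
lemma moments_unique (lab : S → Letter) (C : S → S → ℂ)
    (Γ : FreeAlgebra ℂ S →ₗ[ℂ] ℂ) (hΓ : IsCLTDistribution lab Γ)
    (hC : ∀ k l : S, Γ (FreeAlgebra.ι ℂ k * FreeAlgebra.ι ℂ l) = C k l) :
    ∀ (n : ℕ) (ω : Fin n → S), Γ (wp ω) = mFun lab C n ω := by
  intro n
  induction n using Nat.strong_induction_on with
  | _ n ih =>
    intro ω
    by_cases n0 : n = 0
    · subst n0
      rw [wp_nil, mFun_zero]
      exact hΓ.1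
    by_cases n2 : n = 2
    · subst n2
      have hω : ω = fun i : Fin 2 => if i = 0 then ω 0 else ω 1 := by
        funext i
        fin_cases i <;> simp
      rw [hω, wp_pair, hC, mFun_two]
      simp
    · have hn : 0 < n := Nat.pos_of_ne_zero n0
      have hcum := hΓ.2 n hn n2 ω (muN (chiOf lab ω)) (muN_isMobius _)
      rw [cum_split lab (⇑Γ) hn ω _ (muN_isMobius _)] at hcum
      have hsum : ∑ σ ∈ (IBNCfin (chiOf lab ω)).erase ⊤,
            muN (chiOf lab ω) σ ⊤ * blockProd (fun _ ω' => Γ (wp ω')) ω σ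
          = ∑ σ ∈ (IBNCfin (chiOf lab ω)).erase ⊤,
            muN (chiOf lab ω) σ ⊤ * blockProd (mFun lab C) ω σ := by
        apply Finset.sum_congr rfl
        intro σ hσ
        rw [Finset.mem_erase] at hσ
        congr 1
        rw [blockProd, blockProd]
        apply finprod_congr
        intro q
        exact ih (blockCard σ q) (blockCard_lt hσ.1 q) _
      rw [hsum] at hcum
      rw [mFun_rec lab C n0 n2]
      exact eq_neg_of_add_eq_zero_left hcum

lemma gamma_isCLT (lab : S → Letter) (C : S → S → ℂ) :
    IsCLTDistribution lab (gammaFun lab C) := by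
  constructor
  · have := gamma_wp lab C (Fin.elim0 : Fin 0 → S)
    rw [wp_nil] at this
    rw [this, mFun_zero]
  · intro n hn h2 ω mu hmu
    rw [cum_split lab (⇑(gammaFun lab C)) hn ω mu hmu]
    have hbp : (fun (m : ℕ) (ω' : Fin m → S) => gammaFun lab C (wp ω')) = mFun lab C := by
      funext m ω'
      exact gamma_wp lab C ω'
    rw [hbp, gamma_wp, mFun_rec lab C hn.ne' h2, neg_add_cancel]

lemma gamma_pair (lab : S → Letter) (C : S → S → ℂ) (k l : S) :
    gammaFun lab C (FreeAlgebra.ι ℂ k * FreeAlgebra.ι ℂ l) = C k l := by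
  rw [← wp_pair, gamma_wp, mFun_two]
  simp

end Gamma

/-- For every matrix `C = (C_{k,l})` of complex numbers there is exactly
one free-free-Boolean central limit distribution `Γ_C` on `ℂ⟨Z_k : k ∈ I ⊔ J ⊔ K⟩` with
`Γ_C(Z_k Z_l) = C_{k,l}` for all `k, l`. -/
theorem existsUnique_CLT_distribution {S : Type*} (lab : S → Letter) (C : S → S → ℂ) :
    ∃! Γ : FreeAlgebra ℂ S →ₗ[ℂ] ℂ,
      IsCLTDistribution lab Γ ∧
      ∀ k l : S, Γ (FreeAlgebra.ι ℂ k * FreeAlgebra.ι ℂ l) = C k l := by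
  classical
  refine ⟨gammaFun lab C, ⟨gamma_isCLT lab C, gamma_pair lab C⟩, ?_⟩
  rintro Γ' ⟨hclt, hC⟩
  have hmom := moments_unique lab C Γ' hclt hC
  have hext : Γ'.comp (FreeAlgebra.equivMonoidAlgebraFreeMonoid
        (R := ℂ) (X := S)).symm.toLinearMap
      = (gammaFun lab C).comp (FreeAlgebra.equivMonoidAlgebraFreeMonoid
        (R := ℂ) (X := S)).symm.toLinearMap := by
    apply MonoidAlgebra.lhom_ext'
    intro w
    apply LinearMap.ext
    intro c
    have hs : (MonoidAlgebra.single w c : MonoidAlgebra ℂ (FreeMonoid S))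
        = c • MonoidAlgebra.single w 1 := by
      rw [MonoidAlgebra.smul_single, smul_eq_mul, mul_one]
    have hsymm : (FreeAlgebra.equivMonoidAlgebraFreeMonoid (R := ℂ) (X := S)).symm
          (MonoidAlgebra.single w 1)
        = wp (fun i : Fin w.toList.length => w.toList.get i) := by
      rw [← wp_list]
      apply (FreeAlgebra.equivMonoidAlgebraFreeMonoid (R := ℂ) (X := S)).injective
      rw [AlgEquiv.apply_symm_apply, equiv_listProd]
      rfl
    have key : Γ' ((FreeAlgebra.equivMonoidAlgebraFreeMonoid (R := ℂ) (X := S)).symm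
          (MonoidAlgebra.single w c))
        = (gammaFun lab C) ((FreeAlgebra.equivMonoidAlgebraFreeMonoid
            (R := ℂ) (X := S)).symm (MonoidAlgebra.single w c)) := by
      rw [hs, map_smul, map_smul, map_smul, hsymm, hmom, gamma_wp]
    exact key
  ext x
  have := LinearMap.congr_fun hext (FreeAlgebra.equivMonoidAlgebraFreeMonoid x)
  simpa using this

end FFB
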